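/- Let p ≥ 1 be an integer, k an integer, and e a real number with |e| < 1/(2p). Then the nearest multiple of 1/p to k/p + e is k/p; equivalently, rounding p·(k/p + e) to the nearest integer gives k. Hence TLWE decryption, which computes m* = b − ⟨s, a⟩ = m + e and returns the nearest element of the plaintext space P = {0, 1/p, …, (p−1)/p} to m*, correctly recovers the plaintext m = k/p whenever the noise satisfies |e| < 1/(2p). -/

import Mathlib

/-- TLWE decryption rounding correctness: for an integer `p ≥ 1`, an integer `k` and a
noise term `e` with `|e| < 1/(2p)`, the nearest multiple of `1/p` to `k/p + e` is `k/p`;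
equivalently, rounding `p * (k/p + e)` to the nearest integer gives `k`. -/
theorem tlwe_round_correct (p k : ℤ) (hp : 1 ≤ p) (e : ℝ) (he : |e| < 1 / (2 * (p : ℝ))) :
    (round ((p : ℝ) * ((k : ℝ) / (p : ℝ) + e)) : ℝ) / (p : ℝ) = (k : ℝ) / (p : ℝ) ∧
      round ((p : ℝ) * ((k : ℝ) / (p : ℝ) + e)) = k := by
  have hp0 : (0 : ℝ) < (p : ℝ) := by exact_mod_cast hp
  have hpe : |(p : ℝ) * e| < 1 / 2 := by
    rw [abs_mul, abs_of_pos hp0]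
    calc (p : ℝ) * |e| < (p : ℝ) * (1 / (2 * p)) := by
          exact mul_lt_mul_of_pos_left he hp0
      _ = 1 / 2 := by field_simp
  have hkey : round ((p : ℝ) * ((k : ℝ) / (p : ℝ) + e)) = k := by
    have : (p : ℝ) * ((k : ℝ) / (p : ℝ) + e) = (k : ℝ) + (p : ℝ) * e := by
      field_simp
    rw [this]
    have h0 : round ((p : ℝ) * e) = 0 := by
      rw [round_eq_zero_iff]
      constructor
      · linarith [neg_abs_le ((p : ℝ) * e)]
      · linarith [le_abs_self ((p : ℝ) * e)]
    rw [show ((k : ℝ) + (p : ℝ) * e) = (p : ℝ) * e + (k : ℝ) by ring,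
        round_add_intCast, h0]
    simp
  exact ⟨by rw [hkey], hkey⟩
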